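/- Let (H,R) be a finite-dimensional involutory quasitriangular Hopf algebra over a field k, with R = Σᵢ sᵢ ⊗ tᵢ, and let μ ∈ H* and e ∈ H be a two-sided integral and a two-sided cointegral with μ(e) = 1. Then in H ⊗ H: Σ₍ₑ₎ Σᵢ e₍₁₎·μ(e₍₂₎·sᵢ) ⊗ tᵢ = (S ⊗ id)(R) = R⁻¹. -/
import Mathlib

set_option maxHeartbeats 1000000
set_option synthInstance.maxHeartbeats 400000


open TensorProduct Coalgebra HopfAlgebra

section Aux

variable {k H : Type*} [Field k] [Ring H] [HopfAlgebra k H]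

/-- Right multiplication by `1 ⊗ x` is `lTensor` of right multiplication by `x`. -/
lemma aux_mul_one_tmul (x : H) (u : H ⊗[k] H) :
    u * ((1 : H) ⊗ₜ[k] x) = LinearMap.lTensor H (LinearMap.mulRight k x) u := by
  induction u using TensorProduct.induction_on with
  | zero => simp
  | tmul a b => simp [Algebra.TensorProduct.tmul_mul_tmul]
  | add u v hu hv => simp [add_mul, hu, hv]

/-- Right multiplication by `x ⊗ 1` is `rTensor` of right multiplication by `x`. -/
lemma aux_mul_tmul_one (x : H) (u : H ⊗[k] H) :
    u * (x ⊗ₜ[k] (1 : H)) = LinearMap.rTensor H (LinearMap.mulRight k x) u := by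
  induction u using TensorProduct.induction_on with
  | zero => simp
  | tmul a b => simp [Algebra.TensorProduct.tmul_mul_tmul]
  | add u v hu hv => simp [add_mul, hu, hv]

/-- Pulling a right factor `y` out of the first leg past a functional on the second leg. -/
lemma aux_rid_lTensor_mulRight (μ : Module.Dual k H) (y : H) (u : H ⊗[k] H) :
    TensorProduct.rid k H (LinearMap.lTensor H μ
        (LinearMap.rTensor H (LinearMap.mulRight k y) u))
      = TensorProduct.rid k H (LinearMap.lTensor H μ u) * y := by
  induction u using TensorProduct.induction_on with
  | zero => simp
  | tmul a b => simp [smul_mul_assoc]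
  | add u v hu hv => simp [hu, hv, add_mul]

/-- Key multiplication lemma for `R₁₃ R₂₃`, antipode version. -/
lemma aux_M1 (A B : H ⊗[k] H) :
    LinearMap.rTensor H (LinearMap.mul' k H ∘ₗ LinearMap.rTensor H (antipode (R := k)))
      ((LinearMap.rTensor H ((TensorProduct.mk k H H).flip 1) A)
        * (LinearMap.rTensor H (TensorProduct.mk k H H 1) B))
      = (LinearMap.rTensor H (antipode (R := k)) A) * B := by
  induction A using TensorProduct.induction_on with
  | zero => simp
  | tmul a c =>
    induction B using TensorProduct.induction_on with
    | zero => simp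
    | tmul b d =>
      simp [Algebra.TensorProduct.tmul_mul_tmul]
    | add u v hu hv => simp only [map_add, mul_add, hu, hv]
  | add u v hu hv => simp only [map_add, add_mul, hu, hv]

/-- Key multiplication lemma for `R₁₃ R₂₃`, counit version. -/
lemma aux_M2 (A B : H ⊗[k] H) :
    LinearMap.rTensor H (LinearMap.mul' k H ∘ₗ
        LinearMap.rTensor H (Algebra.linearMap k H ∘ₗ (counit (R := k) (A := H))))
      ((LinearMap.rTensor H ((TensorProduct.mk k H H).flip 1) A)
        * (LinearMap.rTensor H (TensorProduct.mk k H H 1) B))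
      = (LinearMap.rTensor H (Algebra.linearMap k H ∘ₗ (counit (R := k) (A := H))) A) * B := by
  induction A using TensorProduct.induction_on with
  | zero => simp
  | tmul a c =>
    induction B using TensorProduct.induction_on with
    | zero => simp
    | tmul b d =>
      simp [Algebra.TensorProduct.tmul_mul_tmul]
    | add u v hu hv => simp only [map_add, mul_add, hu, hv]
  | add u v hu hv => simp only [map_add, add_mul, hu, hv]

/-- `x ↦ Σ ε(x₁) x₂ = x`, stated as a composition identity. -/
lemma aux_counit_mul_id :
    LinearMap.mul' k H ∘ₗ
        LinearMap.rTensor H (Algebra.linearMap k H ∘ₗ (counit (R := k) (A := H))) ∘ₗ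
        (comul (R := k) (A := H))
      = LinearMap.id := by
  ext x
  simp only [LinearMap.comp_apply, LinearMap.id_coe, id_eq]
  rw [LinearMap.rTensor_comp, LinearMap.comp_apply, rTensor_counit_comul]
  simp

end Aux

/-- Let `(H,R)` be a finite-dimensional involutory quasitriangular Hopf algebra
over a field `k`, with `R = Σᵢ sᵢ ⊗ tᵢ`, and let `μ ∈ H*` and `e ∈ H` be a two-sided integral
and a two-sided cointegral with `μ(e) = 1`.  Then in `H ⊗ H`:
`Σ₍ₑ₎ Σᵢ e₍₁₎·μ(e₍₂₎·sᵢ) ⊗ tᵢ = (S ⊗ id)(R) = R⁻¹`.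
Here `θ : H →ₗ[k] H` is the linear map `s ↦ Σ₍ₑ₎ e₍₁₎·μ(e₍₂₎·s)`, so that the left-hand side
is `(θ ⊗ id)(R)`. -/
theorem cointegral_formula_eq_antipode_R_eq_R_inv
    {k H : Type*} [Field k] [Ring H] [HopfAlgebra k H] [FiniteDimensional k H]
    -- involutory
    (hinv : ∀ x : H, antipode (R := k) (antipode (R := k) x) = x)
    -- quasitriangular structure R
    (R : H ⊗[k] H)
    (hRunit : IsUnit R)
    (hR1 : ∀ x : H,
      (TensorProduct.comm k H H (comul (R := k) x)) * R = R * comul (R := k) x)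
    (hR2 : LinearMap.rTensor H (Coalgebra.comul (R := k)) R
      = (LinearMap.rTensor H ((TensorProduct.mk k H H).flip 1) R)
        * (LinearMap.rTensor H (TensorProduct.mk k H H 1) R))
    (hR3 : LinearMap.lTensor H (Coalgebra.comul (R := k)) R
      = (LinearMap.lTensor H (TensorProduct.mk k H H 1) R)
        * (LinearMap.lTensor H ((TensorProduct.mk k H H).flip 1) R))
    -- two-sided integral and cointegral
    (μ : Module.Dual k H) (e : H)
    (hμ : ∀ x : H,
      TensorProduct.rid k H (LinearMap.lTensor H μ (comul (R := k) x)) = μ x • (1 : H) ∧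
      TensorProduct.lid k H (LinearMap.rTensor H μ (comul (R := k) x)) = μ x • (1 : H))
    (he : ∀ x : H, x * e = counit (R := k) x • e ∧ e * x = counit (R := k) x • e)
    (hμe : μ e = 1)
    -- θ : s ↦ Σ e₍₁₎ · μ(e₍₂₎ · s)
    (θ : H →ₗ[k] H)
    (hθ : ∀ s : H, θ s = TensorProduct.rid k H
      (LinearMap.lTensor H (μ ∘ₗ LinearMap.mulRight k s) (comul (R := k) e))) :
    LinearMap.rTensor H θ R = LinearMap.rTensor H (antipode (R := k)) R ∧
    (LinearMap.rTensor H (antipode (R := k)) R) * R = 1 ∧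
    R * (LinearMap.rTensor H (antipode (R := k)) R) = 1 := by
  -- notation
  set W : H ⊗[k] H := comul (R := k) e with hW_def
  -- `W * comul c = ε(c) • W`
  have hW : ∀ c : H, W * comul (R := k) c = counit (R := k) c • W := by
    intro c
    rw [hW_def, ← Bialgebra.comul_mul, (he c).2, map_smul]
  -- the fundamental identity (I1): `W * (y ⊗ 1) = W * (1 ⊗ S y)`
  have I1 : ∀ y : H, W * (y ⊗ₜ[k] (1 : H)) = W * ((1 : H) ⊗ₜ[k] antipode (R := k) y) := by
    intro y
    set C' : (H ⊗[k] H) ⊗[k] H →ₗ[k] H ⊗[k] H :=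
      LinearMap.mul' k (H ⊗[k] H) ∘ₗ
        TensorProduct.map (LinearMap.mulLeft k W)
          (TensorProduct.mk k H H 1 ∘ₗ antipode (R := k)) with hC'
    have hC'_tmul : ∀ (u : H ⊗[k] H) (d : H),
        C' (u ⊗ₜ[k] d) = (W * u) * ((1 : H) ⊗ₜ[k] antipode (R := k) d) := by
      intro u d
      simp [hC']
    set Z₁ : (H ⊗[k] H) ⊗[k] H :=
      LinearMap.rTensor H (comul (R := k)) (comul (R := k) y) with hZ₁
    -- first evaluation: `C' Z₁ = W * (1 ⊗ S y)`
    have eval1 : C' Z₁ = W * ((1 : H) ⊗ₜ[k] antipode (R := k) y) := by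
      have claim1 : ∀ v : H ⊗[k] H,
          C' (LinearMap.rTensor H (comul (R := k)) v)
            = W * ((1 : H) ⊗ₜ[k] antipode (R := k)
               ((TensorProduct.lid k H) (LinearMap.rTensor H (counit (R := k)) v))) := by
        intro v
        induction v using TensorProduct.induction_on with
        | zero => simp
        | tmul c d =>
          rw [LinearMap.rTensor_tmul, hC'_tmul, hW, LinearMap.rTensor_tmul,
            TensorProduct.lid_tmul, map_smul, TensorProduct.tmul_smul,
            smul_mul_assoc, mul_smul_comm]
        | add u v hu hv =>
          simp only [map_add, hu, hv, TensorProduct.tmul_add, mul_add]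
      rw [hZ₁, claim1, rTensor_counit_comul]
      simp
    -- second evaluation: `C' Z₁ = W * (y ⊗ 1)`
    have eval2 : C' Z₁ = W * (y ⊗ₜ[k] (1 : H)) := by
      have claim2 : ∀ z : (H ⊗[k] H) ⊗[k] H,
          C' z = W * (LinearMap.lTensor H
              (LinearMap.mul' k H ∘ₗ LinearMap.lTensor H (antipode (R := k)))
            ((TensorProduct.assoc k H H H) z)) := by
        intro z
        induction z using TensorProduct.induction_on with
        | zero => rw [map_zero, LinearEquiv.map_zero, map_zero, mul_zero]
        | tmul u d =>
          induction u using TensorProduct.induction_on with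
          | zero => simp
          | tmul a b =>
            rw [hC'_tmul]
            simp [Algebra.TensorProduct.tmul_mul_tmul, mul_assoc]
          | add p q hp hq =>
            simp only [TensorProduct.add_tmul, map_add, hp, hq, mul_add]
        | add u v hu hv =>
          simp only [map_add, hu, hv, mul_add]
      rw [hZ₁, claim2, coassoc_apply, ← LinearMap.lTensor_comp_apply,
        LinearMap.comp_assoc, mul_antipode_lTensor_comul,
        LinearMap.lTensor_comp_apply, lTensor_counit_comul]
      simp
    rw [← eval2, eval1]
  -- θ = antipode pointwise
  have hθS : ∀ x : H, θ x = antipode (R := k) x := by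
    intro x
    have key : W * ((1 : H) ⊗ₜ[k] x) = W * (antipode (R := k) x ⊗ₜ[k] (1 : H)) := by
      rw [I1 (antipode (R := k) x), hinv x]
    rw [hθ x, LinearMap.lTensor_comp, LinearMap.comp_apply,
      ← aux_mul_one_tmul, key, aux_mul_tmul_one, aux_rid_lTensor_mulRight,
      hW_def, (hμ e).1, hμe, one_smul, one_mul]
  have hθeq : θ = antipode (R := k) := LinearMap.ext hθS
  -- first statement
  refine ⟨by rw [hθeq], ?_, ?_⟩
  · -- (S ⊗ id) R * R = 1
    have hu1 : LinearMap.rTensor H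
        (Algebra.linearMap k H ∘ₗ (counit (R := k) (A := H))) R = 1 := by
      have h := congrArg (LinearMap.rTensor H (LinearMap.mul' k H ∘ₗ
        LinearMap.rTensor H (Algebra.linearMap k H ∘ₗ (counit (R := k) (A := H))))) hR2
      rw [← LinearMap.rTensor_comp_apply, LinearMap.comp_assoc,
        aux_counit_mul_id, LinearMap.rTensor_id, LinearMap.id_apply, aux_M2] at h
      exact hRunit.mul_right_cancel (by rw [← h, one_mul])
    have h := congrArg (LinearMap.rTensor H (LinearMap.mul' k H ∘ₗ
      LinearMap.rTensor H (antipode (R := k)))) hR2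
    rw [← LinearMap.rTensor_comp_apply, LinearMap.comp_assoc,
      mul_antipode_rTensor_comul, hu1, aux_M1] at h
    exact h.symm
  · -- R * (S ⊗ id) R = 1
    have hu1 : LinearMap.rTensor H
        (Algebra.linearMap k H ∘ₗ (counit (R := k) (A := H))) R = 1 := by
      have h := congrArg (LinearMap.rTensor H (LinearMap.mul' k H ∘ₗ
        LinearMap.rTensor H (Algebra.linearMap k H ∘ₗ (counit (R := k) (A := H))))) hR2
      rw [← LinearMap.rTensor_comp_apply, LinearMap.comp_assoc,
        aux_counit_mul_id, LinearMap.rTensor_id, LinearMap.id_apply, aux_M2] at h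
      exact hRunit.mul_right_cancel (by rw [← h, one_mul])
    have h2 : (LinearMap.rTensor H (antipode (R := k)) R) * R = 1 := by
      have h := congrArg (LinearMap.rTensor H (LinearMap.mul' k H ∘ₗ
        LinearMap.rTensor H (antipode (R := k)))) hR2
      rw [← LinearMap.rTensor_comp_apply, LinearMap.comp_assoc,
        mul_antipode_rTensor_comul, hu1, aux_M1] at h
      exact h.symm
    obtain ⟨U, hU⟩ := hRunit
    have hRinv : R * (↑U⁻¹ : H ⊗[k] H) = 1 := by rw [← hU]; exact U.mul_inv
    have hT : LinearMap.rTensor H (antipode (R := k)) R = (↑U⁻¹ : H ⊗[k] H) := by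
      calc LinearMap.rTensor H (antipode (R := k)) R
          = LinearMap.rTensor H (antipode (R := k)) R * (R * (↑U⁻¹ : H ⊗[k] H)) := by
            rw [hRinv, mul_one]
        _ = (LinearMap.rTensor H (antipode (R := k)) R * R) * (↑U⁻¹ : H ⊗[k] H) := by
            rw [mul_assoc]
        _ = (↑U⁻¹ : H ⊗[k] H) := by rw [h2, one_mul]
    rw [hT]; exact hRinv
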